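/- Let Γ = (E, V, ∂) be a hypergraph and let s ⊆ E be a cyclic set of edges. Then the cycles contained in s are pairwise independent, and s is their disjoint union. -/

import Mathlib

/-! Hypergraph notions.  A hypergraph `Γ = (E, V, ∂)` is given by types `E` (edges),
`V` (vertices) and a boundary map `bd : E → Set V` with `bd e ≠ ∅` for all `e`.
A vertex `v` is incident to an edge `e` if `v ∈ bd e`. -/

variable {E V : Type*}

/-- A set `s ⊆ E` is cyclic if it is finite and every vertex is incident to exactly
two or to zero edges of `s`. -/
def IsCyclicSet (bd : E → Set V) (s : Set E) : Prop :=
  s.Finite ∧ ∀ v : V, {e ∈ s | v ∈ bd e}.ncard = 2 ∨ {e ∈ s | v ∈ bd e} = ∅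

/-- A cycle is a minimal nonempty cyclic set: a nonempty cyclic set containing no
smaller nonempty cyclic set. -/
def IsCycle (bd : E → Set V) (s : Set E) : Prop :=
  IsCyclicSet bd s ∧ s.Nonempty ∧
    ∀ t ⊆ s, IsCyclicSet bd t → t.Nonempty → t = s

/-- Two sets of edges are independent if no vertex is incident both to an edge of the
first and to an edge of the second, i.e. `(⋃_{e∈s} ∂e) ∩ (⋃_{e∈t} ∂e) = ∅`. -/
def Indep (bd : E → Set V) (s t : Set E) : Prop :=
  ∀ v : V, ¬ ((∃ e ∈ s, v ∈ bd e) ∧ (∃ e ∈ t, v ∈ bd e))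

lemma degset_subset {bd : E → Set V} {s t : Set E} (hts : t ⊆ s) (v : V) :
    {e ∈ t | v ∈ bd e} ⊆ {e ∈ s | v ∈ bd e} := fun e he => ⟨hts he.1, he.2⟩

lemma degset_eq {bd : E → Set V} {s t : Set E} (hs : IsCyclicSet bd s)
    (ht : IsCyclicSet bd t) (hts : t ⊆ s) {v : V}
    (hne : {e ∈ t | v ∈ bd e}.Nonempty) :
    {e ∈ t | v ∈ bd e} = {e ∈ s | v ∈ bd e} := by
  have h2t : {e ∈ t | v ∈ bd e}.ncard = 2 :=
    (ht.2 v).resolve_right (Set.nonempty_iff_ne_empty.mp hne)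
  have h2s : {e ∈ s | v ∈ bd e}.ncard = 2 := by
    refine (hs.2 v).resolve_right ?_
    intro h
    obtain ⟨e, he⟩ := hne
    exact absurd (h ▸ degset_subset hts v he) (Set.notMem_empty e)
  exact Set.eq_of_subset_of_ncard_le (degset_subset hts v) (by omega)
    (hs.1.subset (fun e he => he.1))

lemma diff_cyclic {bd : E → Set V} {s t : Set E} (hs : IsCyclicSet bd s)
    (ht : IsCyclicSet bd t) (hts : t ⊆ s) : IsCyclicSet bd (s \ t) := by
  refine ⟨hs.1.diff, fun v => ?_⟩
  rcases Set.eq_empty_or_nonempty {e ∈ t | v ∈ bd e} with h | h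
  · rcases hs.2 v with h2 | h0
    · left
      have : {e ∈ s \ t | v ∈ bd e} = {e ∈ s | v ∈ bd e} := by
        ext e
        constructor
        · exact fun he => ⟨he.1.1, he.2⟩
        · intro he
          refine ⟨⟨he.1, fun het => ?_⟩, he.2⟩
          exact absurd (h ▸ (show e ∈ {e ∈ t | v ∈ bd e} from ⟨het, he.2⟩)) (Set.notMem_empty e)
      rw [this]; exact h2
    · right
      ext e
      simp only [Set.mem_setOf_eq, Set.mem_empty_iff_false, iff_false]
      intro he
      exact absurd (h0 ▸ (show e ∈ {e ∈ s | v ∈ bd e} from ⟨he.1.1, he.2⟩)) (Set.notMem_empty e)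
  · right
    have heq := degset_eq hs ht hts h
    ext e
    simp only [Set.mem_setOf_eq, Set.mem_empty_iff_false, iff_false]
    rintro ⟨⟨hes, het⟩, hev⟩
    exact het ((Set.ext_iff.mp heq e).mpr ⟨hes, hev⟩).1

lemma exists_cycle {bd : E → Set V} :
    ∀ n (s : Set E), s.ncard = n → IsCyclicSet bd s → s.Nonempty →
      ∃ c ⊆ s, IsCycle bd c := by
  intro n
  induction n using Nat.strong_induction_on with
  | _ n ih =>
    intro s hn hs hne
    by_cases h : ∀ t ⊆ s, IsCyclicSet bd t → t.Nonempty → t = s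
    · exact ⟨s, subset_rfl, hs, hne, h⟩
    · push_neg at h
      obtain ⟨t, hts, htc, htne, hts'⟩ := h
      obtain ⟨c, hct, hc⟩ :=
        ih t.ncard (hn ▸ Set.ncard_lt_ncard (ssubset_of_subset_of_ne hts hts') hs.1)
          t rfl htc htne
      exact ⟨c, hct.trans hts, hc⟩

lemma mem_cycle {bd : E → Set V} :
    ∀ n (s : Set E), s.ncard = n → IsCyclicSet bd s → ∀ e ∈ s,
      ∃ c, IsCycle bd c ∧ c ⊆ s ∧ e ∈ c := by
  intro n
  induction n using Nat.strong_induction_on with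
  | _ n ih =>
    intro s hn hs e he
    obtain ⟨c, hcs, hc⟩ := exists_cycle s.ncard s rfl hs ⟨e, he⟩
    by_cases hec : e ∈ c
    · exact ⟨c, hc, hcs, hec⟩
    · have hlt : (s \ c).ncard < n := by
        rw [← hn]
        refine Set.ncard_lt_ncard ⟨Set.diff_subset, fun hsub => ?_⟩ hs.1
        obtain ⟨x, hx⟩ := hc.2.1
        exact (hsub (hcs hx)).2 hx
      obtain ⟨d, hd, hds, hed⟩ :=
        ih (s \ c).ncard hlt (s \ c) rfl (diff_cyclic hs hc.1 hcs) e ⟨he, hec⟩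
      exact ⟨d, hd, hds.trans Set.diff_subset, hed⟩

/-- in a hypergraph, the cycles contained in a cyclic set of edges `s`
are pairwise independent, and `s` is their (disjoint) union. -/
theorem cyclicSet_eq_disjoint_union_of_cycles (bd : E → Set V)
    (hbd : ∀ e, (bd e).Nonempty) (s : Set E) (hs : IsCyclicSet bd s) :
    {c : Set E | IsCycle bd c ∧ c ⊆ s}.Pairwise (Indep bd) ∧
    ⋃₀ {c : Set E | IsCycle bd c ∧ c ⊆ s} = s := by
  constructor
  · rintro c ⟨hc, hcs⟩ c' ⟨hc', hc's⟩ hne v ⟨⟨e, hec, hev⟩, ⟨e', hec', he'v⟩⟩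
    have h1 : {x ∈ c | v ∈ bd x} = {x ∈ s | v ∈ bd x} :=
      degset_eq hs hc.1 hcs ⟨e, hec, hev⟩
    have h2 : {x ∈ c' | v ∈ bd x} = {x ∈ s | v ∈ bd x} :=
      degset_eq hs hc'.1 hc's ⟨e', hec', he'v⟩
    -- c ∩ c' is a nonempty cyclic subset of both
    have hinter : IsCyclicSet bd (c ∩ c') := by
      refine ⟨hc.1.1.subset Set.inter_subset_left, fun w => ?_⟩
      rcases Set.eq_empty_or_nonempty {x ∈ c | w ∈ bd x} with h | h
      · right
        ext x
        simp only [Set.mem_setOf_eq, Set.mem_empty_iff_false, iff_false]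
        rintro ⟨⟨hx, _⟩, hw⟩
        exact absurd (h ▸ (show x ∈ {x ∈ c | w ∈ bd x} from ⟨hx, hw⟩)) (Set.notMem_empty x)
      · rcases Set.eq_empty_or_nonempty {x ∈ c' | w ∈ bd x} with h' | h'
        · right
          ext x
          simp only [Set.mem_setOf_eq, Set.mem_empty_iff_false, iff_false]
          rintro ⟨⟨_, hx⟩, hw⟩
          exact absurd (h' ▸ (show x ∈ {x ∈ c' | w ∈ bd x} from ⟨hx, hw⟩)) (Set.notMem_empty x)
        · left
          have e1 := degset_eq hs hc.1 hcs h
          have e2 := degset_eq hs hc'.1 hc's h'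
          have : {x ∈ c ∩ c' | w ∈ bd x} = {x ∈ s | w ∈ bd x} := by
            ext x
            constructor
            · rintro ⟨⟨hx, _⟩, hw⟩; exact ⟨hcs hx, hw⟩
            · intro hx
              refine ⟨⟨?_, ?_⟩, hx.2⟩
              · exact ((Set.ext_iff.mp e1 x).mpr hx).1
              · exact ((Set.ext_iff.mp e2 x).mpr hx).1
          rw [this]
          exact (hs.2 w).resolve_right
            (Set.nonempty_iff_ne_empty.mp (h.mono (degset_subset hcs w)))
    have hene : (c ∩ c').Nonempty :=
      ⟨e, hec, ((Set.ext_iff.mp h2 e).mpr ⟨hcs hec, hev⟩).1⟩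
    have ha := hc.2.2 (c ∩ c') Set.inter_subset_left hinter hene
    have hb := hc'.2.2 (c ∩ c') Set.inter_subset_right hinter hene
    exact hne (ha.symm.trans hb)
  · apply Set.eq_of_subset_of_subset
    · rintro e ⟨c, ⟨_, hcs⟩, hec⟩
      exact hcs hec
    · intro e he
      obtain ⟨c, hc, hcs, hec⟩ := mem_cycle s.ncard s rfl hs e he
      exact ⟨c, ⟨hc, hcs⟩, hec⟩
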